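/- Let V be a finite-dimensional complex vector space, f₁, …, f_i ∈ V linearly independent, E = f₁ ∧ … ∧ f_i, v ∈ V with v ∧ E ≠ 0, and i ≤ k ≤ n = dim V. Then every ψ ∈ E ∧ Λ^{k-i}V with v ∧ ψ = 0 can be written as ψ = v ∧ φ for some φ ∈ E ∧ Λ^{k-1-i}V (where Λ^{-1}V := 0). -/

import Mathlib

open ExteriorAlgebra

private lemma contract_pow {V : Type*} [AddCommGroup V] [Module ℂ V]
    (ξ : Module.Dual ℂ V) {m : ℕ} {x : ExteriorAlgebra ℂ V}
    (hx : x ∈ (LinearMap.range (ι ℂ : V →ₗ[ℂ] ExteriorAlgebra ℂ V)) ^ m) :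
    CliffordAlgebra.contractLeft ξ x ∈
      (LinearMap.range (ι ℂ : V →ₗ[ℂ] ExteriorAlgebra ℂ V)) ^ (m - 1) ∧
      (m = 0 → CliffordAlgebra.contractLeft ξ x = 0) := by
  induction hx using Submodule.pow_induction_on_left' with
  | algebraMap r =>
    constructor
    · rw [CliffordAlgebra.contractLeft_algebraMap]; exact Submodule.zero_mem _
    · intro _; rw [CliffordAlgebra.contractLeft_algebraMap]
  | add x y i hx hy ihx ihy =>
    constructor
    · rw [map_add]; exact Submodule.add_mem _ ihx.1 ihy.1
    · intro hi; rw [map_add, ihx.2 hi, ihy.2 hi, add_zero]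
  | mem_mul a ha i x hx ih =>
    obtain ⟨a, rfl⟩ := ha
    refine ⟨?_, by omega⟩
    rw [CliffordAlgebra.contractLeft_ι_mul]
    refine Submodule.sub_mem _ (Submodule.smul_mem _ _ ?_) ?_
    · simpa using hx
    · rcases Nat.eq_zero_or_pos i with hi | hi
      · rw [ih.2 hi, mul_zero]; exact Submodule.zero_mem _
      · have hi' : i - 1 + 1 = i := by omega
        have h := Submodule.mul_mem_mul (LinearMap.mem_range_self (ι ℂ) a) ih.1
        rw [← pow_succ', hi'] at h
        simpa [Nat.succ_sub_one] using h

private lemma contract_list_mul {V : Type*} [AddCommGroup V] [Module ℂ V]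
    (ξ : Module.Dual ℂ V) (l : List V) (hl : ∀ a ∈ l, ξ a = 0)
    (ω : ExteriorAlgebra ℂ V) :
    CliffordAlgebra.contractLeft ξ ((l.map (ι ℂ)).prod * ω) =
      ((-1 : ℂ) ^ l.length) • ((l.map (ι ℂ)).prod * CliffordAlgebra.contractLeft ξ ω) := by
  induction l with
  | nil => simp
  | cons a l ih =>
    have ha : ξ a = 0 := hl a List.mem_cons_self
    have hl' : ∀ b ∈ l, ξ b = 0 := fun b hb => hl b (List.mem_cons_of_mem a hb)
    simp only [List.map_cons, List.prod_cons, List.length_cons, mul_assoc]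
    rw [CliffordAlgebra.contractLeft_ι_mul, ha, zero_smul, zero_sub, ih hl']
    simp [mul_smul_comm, pow_succ, mul_smul]

/-- Lemma 4.4(2) in multilinear-algebra form.
With `f₁, …, f_i` linearly independent, `E = f₁ ∧ ⋯ ∧ f_i`, `v ∧ E ≠ 0`, and
`i ≤ k ≤ n = dim V`: every `ψ ∈ E ∧ Λ^{k-i}V` with `v ∧ ψ = 0` can be written
as `ψ = v ∧ φ` with `φ ∈ E ∧ Λ^{k-1-i}V` (where for `k = i` the space
`Λ^{-1}V := 0`). -/
theorem stmt13 (V : Type*) [AddCommGroup V] [Module ℂ V] [FiniteDimensional ℂ V]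
    (n i k : ℕ) (hn : Module.finrank ℂ V = n) (hik : i ≤ k) (hkn : k ≤ n)
    (f : Fin i → V) (hf : LinearIndependent ℂ f)
    (E : ExteriorAlgebra ℂ V) (hE : E = (List.ofFn fun t => ι ℂ (f t)).prod)
    (v : V) (hvE : ι ℂ v * E ≠ 0)
    (ψ : ExteriorAlgebra ℂ V)
    (hψ : ψ ∈ Submodule.map (LinearMap.mulLeft ℂ E) (⋀[ℂ]^(k - i) V))
    (hker : ι ℂ v * ψ = 0) :
    ∃ φ ∈ (if k = i then (⊥ : Submodule ℂ (ExteriorAlgebra ℂ V))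
      else Submodule.map (LinearMap.mulLeft ℂ E) (⋀[ℂ]^(k - 1 - i) V)),
      ψ = ι ℂ v * φ := by
  classical
  -- v is not in the span of f
  have hv_span : v ∉ Submodule.span ℂ (Set.range f) := by
    intro hv
    apply hvE
    have hzero : ∀ m ∈ Submodule.span ℂ (Set.range f), ι ℂ m * E = 0 := by
      intro m hm
      induction hm using Submodule.span_induction with
      | mem x hx =>
        obtain ⟨t, rfl⟩ := hx
        rw [hE]
        exact ExteriorAlgebra.ι_mul_prod_list f t
      | zero => simp
      | add x y _ _ hx hy => rw [map_add, add_mul, hx, hy, add_zero]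
      | smul c x _ hx => rw [map_smul, smul_mul_assoc, hx, smul_zero]
    exact hzero v hv
  -- get a dual functional ξ with ξ v = 1 and ξ (f t) = 0
  obtain ⟨ξ₀, hξ₀v, hξ₀f⟩ := Submodule.exists_dual_map_eq_bot_of_notMem hv_span inferInstance
  set ξ : Module.Dual ℂ V := (ξ₀ v)⁻¹ • ξ₀ with hξ
  have hξv : ξ v = 1 := by simp [hξ, inv_mul_cancel₀ hξ₀v]
  have hξf : ∀ t, ξ (f t) = 0 := by
    intro t
    have : ξ₀ (f t) = 0 := by
      have : ξ₀ (f t) ∈ (Submodule.span ℂ (Set.range f)).map ξ₀ :=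
        Submodule.mem_map_of_mem (Submodule.subset_span ⟨t, rfl⟩)
      rwa [hξ₀f, Submodule.mem_bot] at this
    simp [hξ, this]
  set D := CliffordAlgebra.contractLeft (Q := (0 : QuadraticForm ℂ V)) ξ with hD
  -- ψ = ι v * D ψ
  have key : ψ = ι ℂ v * D ψ := by
    have := CliffordAlgebra.contractLeft_ι_mul (Q := (0 : QuadraticForm ℂ V)) (d := ξ) v ψ
    rw [hker, map_zero, hξv, one_smul] at this
    exact (sub_eq_zero.mp this.symm)
  obtain ⟨ω, hω, hψE⟩ := hψ
  have hψE' : ψ = E * ω := hψE.symm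
  -- compute D ψ
  have hlist : (List.ofFn fun t => ι ℂ (f t)) = (List.ofFn f).map (ι ℂ) := by
    rw [List.map_ofFn]; rfl
  have hlen : (List.ofFn f).length = i := List.length_ofFn
  have hmemf : ∀ a ∈ List.ofFn f, ξ a = 0 := by
    intro a ha
    obtain ⟨t, rfl⟩ := List.mem_ofFn.mp ha
    exact hξf t
  have hDψ : D ψ = ((-1 : ℂ) ^ i) • (E * D ω) := by
    rw [hψE', hE, hlist, hD, contract_list_mul ξ _ hmemf ω, hlen]
  by_cases hk : k = i
  · -- ω ∈ Λ^0, so D ω = 0 and ψ = 0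
    refine ⟨0, by simp [hk], ?_⟩
    have h0 : k - i = 0 := by omega
    rw [h0] at hω
    have hDω : D ω = 0 := (contract_pow ξ hω).2 rfl
    rw [key, hDψ, hDω]
    simp
  · -- k > i
    have hki : k - i = (k - 1 - i) + 1 := by omega
    rw [hki] at hω
    have hDω := (contract_pow ξ hω).1
    simp only [Nat.add_sub_cancel] at hDω
    refine ⟨((-1 : ℂ) ^ i) • (E * D ω), ?_, ?_⟩
    · rw [if_neg hk]
      refine Submodule.smul_mem _ _ ?_
      exact Submodule.mem_map_of_mem hDω
    · rw [key, hDψ]
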